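/- A metric that agrees with a length metric on interior points equals the excursion-infimum extension: let (H, d) be a length metric space, H̄ ⊇ H, and define for z, w ∈ H̄ the quantity d̂(z,w) as the infimum of lengths (computed via suprema of sums of d-distances over subdivision points lying in H) over admissible paths from z to w in H̄. Then for z, w ∈ H, d̂(z,w) = d(z,w). -/
import Mathlib


open Set ENNReal

/-- The length of (the restriction to `[s,t]` of) a path `P` in `H̄`, computed as the
supremum over finite subdivisions whose points are mapped into `H` of the sums of
consecutive `d`-distances. -/
noncomputable def subdivLength {X : Type*} (H : Set X) (d : X → X → ℝ) (P : ℝ → X)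
    (s t : ℝ) : ℝ≥0∞ :=
  sSup { r : ℝ≥0∞ | ∃ (n : ℕ) (u : Fin (n + 1) → ℝ), Monotone u ∧
    (∀ j, u j ∈ Set.Icc s t) ∧ (∀ j, P (u j) ∈ H) ∧
    r = ∑ j : Fin n, ENNReal.ofReal (d (P (u j.castSucc)) (P (u j.succ))) }

/-- The excursion-infimum extension `d̂`: the infimum of lengths over admissible paths
(continuous paths whose preimage of `H̄ ∖ H` is countable) between two points of `H̄`. -/
noncomputable def excursionInfDist {X : Type*} [TopologicalSpace X]
    (H : Set X) (d : X → X → ℝ) (z w : X) : ℝ≥0∞ :=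
  sInf { r : ℝ≥0∞ | ∃ (P : ℝ → X) (a b : ℝ), a ≤ b ∧ ContinuousOn P (Set.Icc a b) ∧
    P a = z ∧ P b = w ∧ (Set.Icc a b ∩ P ⁻¹' Hᶜ).Countable ∧
    r = subdivLength H d P a b }

/-- A metric that agrees with a length metric on interior points equals
the excursion-infimum extension: if `d` is a length metric on `H` (i.e. `d(z,w)` equals
the infimum of `d`-lengths of continuous paths in `H` from `z` to `w`), then for
`z, w ∈ H` the excursion-infimum extension `d̂` satisfies `d̂(z,w) = d(z,w)`. -/
theorem excursionInfDist_eq_of_lengthMetric {X : Type*} [TopologicalSpace X]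
    (H : Set X) (d : X → X → ℝ)
    (hdsymm : ∀ z ∈ H, ∀ w ∈ H, d z w = d w z)
    (hdtri : ∀ z ∈ H, ∀ w ∈ H, ∀ x ∈ H, d z x ≤ d z w + d w x)
    (hdpos : ∀ z ∈ H, ∀ w ∈ H, (d z w = 0 ↔ z = w))
    (hdnonneg : ∀ z ∈ H, ∀ w ∈ H, 0 ≤ d z w)
    (hlength : ∀ z ∈ H, ∀ w ∈ H,
      ENNReal.ofReal (d z w) =
        sInf { r : ℝ≥0∞ | ∃ (P : ℝ → X) (a b : ℝ), a ≤ b ∧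
          ContinuousOn P (Set.Icc a b) ∧ Set.MapsTo P (Set.Icc a b) H ∧
          P a = z ∧ P b = w ∧ r = subdivLength H d P a b }) :
    ∀ z ∈ H, ∀ w ∈ H, excursionInfDist H d z w = ENNReal.ofReal (d z w) := by
  intro z hz w hw
  apply le_antisymm
  · -- d̂ ≤ d : every path in H is admissible
    rw [hlength z hz w hw]
    apply sInf_le_sInf
    rintro r ⟨P, a, b, hab, hcont, hmaps, hPa, hPb, hr⟩
    refine ⟨P, a, b, hab, hcont, hPa, hPb, ?_, hr⟩
    have : Set.Icc a b ∩ P ⁻¹' Hᶜ = ∅ := by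
      ext x
      simp only [Set.mem_inter_iff, Set.mem_preimage, Set.mem_compl_iff, Set.mem_empty_iff_false,
        iff_false, not_and]
      exact fun hx hPx => hPx (hmaps hx)
    rw [this]; exact Set.countable_empty
  · -- d ≤ d̂ : the two-point subdivision witnesses d z w ≤ length of any admissible path
    apply le_sInf
    rintro r ⟨P, a, b, hab, hcont, hPa, hPb, hcount, hr⟩
    rw [hr]
    apply le_sSup
    refine ⟨1, fun j => if (j : ℕ) = 0 then a else b, ?_, ?_, ?_, ?_⟩
    · intro i j hij
      fin_cases i <;> fin_cases j <;> simp_all <;> omega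
    · intro j
      by_cases h : (j : ℕ) = 0 <;> simp [h, hab, le_refl]
    · intro j
      by_cases h : (j : ℕ) = 0 <;> simp [h, hPa, hPb, hz, hw]
    · simp [hPa, hPb]
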